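/- Let u = (u_1,...,u_n) be a lace diagram for (e_0,...,e_n) and let (w_1,...,w_n) be any sequence of finitely supported permutations such that every descent of w_i is <= e_i and every descent of w_i^{-1} is <= e_{i-1}. If phi_u(S(w)) is nonzero, where S(w) = S_{w_1}(x^1;x^0) ... S_{w_n}(x^n;x^{n-1}), then w_i <= u_i in the Bruhat order for every i = 1,...,n. -/

import Mathlib

open MvPolynomial

/-! Common setup.  Dots in columns, positions in permutations, and variable
indices are all 0-indexed: dot `q` (0-indexed) of column `i` is dot `q+1`
(1-indexed) in the paper, the variable `(i, j) : ℕ × ℕ` is the Chern root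
`x^i_{j+1}`, and in the Schubert variable type `ℕ ⊕ ℕ`, `Sum.inl a` is
`x_{a+1}` and `Sum.inr b` is `y_{b+1}`. -/

/-- Coxeter length = number of inversions of a (finitely supported) permutation of ℕ. -/
noncomputable def ell (w : Equiv.Perm ℕ) : ℕ :=
  {p : ℕ × ℕ | p.1 < p.2 ∧ w p.2 < w p.1}.ncard

/-- A finitely supported permutation of ℕ. -/
def FinSupp (w : Equiv.Perm ℕ) : Prop := {x | w x ≠ x}.Finite

/-- A lace diagram for the dimension vector `e 0, …, e n`, encoded as a sequence
`w 1, …, w n` of finitely supported permutations of ℕ (normalized so that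
`w i = 1` outside `1 ≤ i ≤ n`): all descent positions of `w i` are `< e i` and
all descent positions of `(w i)⁻¹` are `< e (i-1)` (0-indexed positions). -/
def IsLace (n : ℕ) (e : ℕ → ℕ) (w : ℕ → Equiv.Perm ℕ) : Prop :=
  (∀ i, i = 0 ∨ n < i → w i = 1) ∧
  ∀ i, 1 ≤ i → i ≤ n → FinSupp (w i) ∧
    (∀ k, w i (k + 1) < w i k → k < e i) ∧
    (∀ k, (w i)⁻¹ (k + 1) < (w i)⁻¹ k → k < e (i - 1))

/-- `chain w i k p = (w k)⁻¹ (⋯ ((w (i+1))⁻¹ p))` for `k ≥ i`, and `p` for `k ≤ i`. -/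
def chain (w : ℕ → Equiv.Perm ℕ) (i : ℕ) : ℕ → ℕ → ℕ
  | 0, p => p
  | k + 1, p => if k + 1 ≤ i then p else (w (k + 1))⁻¹ (chain w i k p)

/-- The rank conditions of a lace diagram: `rank e w i j` is the number of dots
`p < e i` of column `i` whose strand continues through column `j`. -/
noncomputable def rank (e : ℕ → ℕ) (w : ℕ → Equiv.Perm ℕ) (i j : ℕ) : ℕ :=
  {p : ℕ | p < e i ∧ ∀ k, i < k → k ≤ j → chain w i k p < e k}.ncard

/-- The lace diagram `w` has rank conditions `r` (for `0 ≤ i ≤ j ≤ n`). -/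
def RankEq (n : ℕ) (e : ℕ → ℕ) (w : ℕ → Equiv.Perm ℕ) (r : ℕ → ℕ → ℕ) : Prop :=
  ∀ i j, i ≤ j → j ≤ n → rank e w i j = r i j

/-- The length of a lace diagram. -/
noncomputable def diagLength (n : ℕ) (w : ℕ → Equiv.Perm ℕ) : ℕ :=
  ∑ i ∈ Finset.Icc 1 n, ell (w i)

/-- The expected codimension `d(r)`. -/
def codim (n : ℕ) (r : ℕ → ℕ → ℕ) : ℕ :=
  ∑ i ∈ Finset.range (n + 1), ∑ j ∈ Finset.range (n + 1),
    if i < j then (r i (j - 1) - r i j) * (r (i + 1) j - r i j) else 0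

/-- A minimal lace diagram: its length equals the expected codimension of its
rank conditions. -/
def IsMinimal (n : ℕ) (e : ℕ → ℕ) (w : ℕ → Equiv.Perm ℕ) : Prop :=
  IsLace n e w ∧ diagLength n w = codim n (rank e w)

/-- The longest element of `S m` (0-indexed), as a permutation of ℕ. -/
def longest (m : ℕ) : Equiv.Perm ℕ where
  toFun i := if i < m then m - 1 - i else i
  invFun i := if i < m then m - 1 - i else i
  left_inv i := by dsimp only; split_ifs <;> omega
  right_inv i := by dsimp only; split_ifs <;> omega

/-- Interchanging the x-variables `x (i+1)` and `x (i+2)` (0-indexed: `inl i`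
and `inl (i+1)`). -/
noncomputable def sX (i : ℕ) (f : MvPolynomial (ℕ ⊕ ℕ) ℤ) : MvPolynomial (ℕ ⊕ ℕ) ℤ :=
  rename (Sum.map (Equiv.swap i (i + 1)) id) f

/-- `S` is the family of double Schubert polynomials `S w = 𝔖_w(x; y)`:
it takes the prescribed product value on each longest element, it satisfies the
divided difference recursion `(x i - x (i+1)) * S (w * s i) = S w - (S w)^{s i}`
when `w` has a descent at `i` and `(S w)^{s i} = S w` otherwise, and only the
variables up to the last descents of `w` and `w⁻¹` occur in `S w`. -/
def IsSchubertFamily (S : Equiv.Perm ℕ → MvPolynomial (ℕ ⊕ ℕ) ℤ) : Prop :=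
  (∀ m : ℕ, S (longest m) =
      ∏ i ∈ Finset.range m, ∏ j ∈ Finset.range m,
        if i + j + 2 ≤ m then X (Sum.inl i) - X (Sum.inr j) else 1) ∧
  (∀ w : Equiv.Perm ℕ, FinSupp w → ∀ i : ℕ,
    (w (i + 1) < w i →
      (X (Sum.inl i) - X (Sum.inl (i + 1))) * S (w * Equiv.swap i (i + 1)) =
        S w - sX i (S w)) ∧
    (w i < w (i + 1) → sX i (S w) = S w)) ∧
  (∀ w : Equiv.Perm ℕ, FinSupp w → ∀ k l : ℕ,
    (∀ t, k ≤ t → ¬w (t + 1) < w t) → (∀ t, l ≤ t → ¬w⁻¹ (t + 1) < w⁻¹ t) →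
    ∀ v ∈ (S w).vars, (∃ a < k, v = Sum.inl a) ∨ (∃ b < l, v = Sum.inr b))

/-- The product `S(w) = 𝔖_{w 1}(x^1;x^0) ⋯ 𝔖_{w n}(x^n;x^{n-1})`, in the
variables `(i, j) = x^i_{j+1}`. -/
noncomputable def Sprod (n : ℕ) (S : Equiv.Perm ℕ → MvPolynomial (ℕ ⊕ ℕ) ℤ)
    (w : ℕ → Equiv.Perm ℕ) : MvPolynomial (ℕ × ℕ) ℤ :=
  ∏ i ∈ Finset.Icc 1 n,
    rename (Sum.elim (fun a => (i, a)) (fun b => (i - 1, b))) (S (w i))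

/-- The component-formula polynomial `Q_r`: the sum of `Sprod n S w` over all
minimal lace diagrams `w` with rank conditions `r`. -/
noncomputable def Qpoly (n : ℕ) (e : ℕ → ℕ) (r : ℕ → ℕ → ℕ)
    (S : Equiv.Perm ℕ → MvPolynomial (ℕ ⊕ ℕ) ℤ) : MvPolynomial (ℕ × ℕ) ℤ :=
  ∑ᶠ (w : ℕ → Equiv.Perm ℕ) (_ : IsMinimal n e w ∧ RankEq n e w r), Sprod n S w

/-- The shifted permutation `1^k × w`: fixes `0, …, k-1` (0-indexed) and sends
`k + j` to `k + w j`. -/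
def shiftPerm (k : ℕ) (w : Equiv.Perm ℕ) : Equiv.Perm ℕ where
  toFun j := if j < k then j else w (j - k) + k
  invFun j := if j < k then j else w⁻¹ (j - k) + k
  left_inv j := by
    dsimp only
    by_cases h : j < k
    · simp [h]
    · have h1 : ¬ w (j - k) + k < k := by omega
      simp only [if_neg h, if_neg h1, Nat.add_sub_cancel, Equiv.Perm.inv_def, Equiv.symm_apply_apply]
      omega
  right_inv j := by
    dsimp only
    by_cases h : j < k
    · simp [h]
    · have h1 : ¬ w⁻¹ (j - k) + k < k := by omega
      have h2 : w (w⁻¹ (j - k)) = j - k := w.apply_symm_apply _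
      simp only [if_neg h, if_neg h1, Nat.add_sub_cancel, h2]
      omega

/-- The lace diagram `(1^k × w 1, …, 1^k × w n)`. -/
def shiftDiag (k : ℕ) (w : ℕ → Equiv.Perm ℕ) : ℕ → Equiv.Perm ℕ :=
  fun i => shiftPerm k (w i)

/-- The transformation of lace diagrams, allowed at `(i, j)` (0-indexed `j`,
so `j + 1 < e i`) when exactly one of the two descent conditions holds; it
replaces `w i` by `w i * s j` and `w (i+1)` by `s j * w (i+1)`. -/
def TransStep (n : ℕ) (e : ℕ → ℕ) (w w' : ℕ → Equiv.Perm ℕ) : Prop :=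
  IsLace n e w ∧ ∃ i j, 1 ≤ i ∧ i + 1 ≤ n ∧ j + 1 < e i ∧
    Xor' (w i (j + 1) < w i j) ((w (i + 1))⁻¹ (j + 1) < (w (i + 1))⁻¹ j) ∧
    w' = Function.update (Function.update w i (w i * Equiv.swap j (j + 1))) (i + 1)
          (Equiv.swap j (j + 1) * w (i + 1))

/-- The column where the strand through dot `q` of column `c` starts. -/
def startCol (e : ℕ → ℕ) (w : ℕ → Equiv.Perm ℕ) : ℕ → ℕ → ℕ
  | 0, _ => 0
  | c + 1, q => if w (c + 1) q < e c then startCol e w c (w (c + 1) q) else c + 1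

/-- The starting dot `(column, position)` of the strand through dot `q` of column `c`. -/
def startDot (e : ℕ → ℕ) (w : ℕ → Equiv.Perm ℕ) : ℕ → ℕ → ℕ × ℕ
  | 0, q => (0, q)
  | c + 1, q => if w (c + 1) q < e c then startDot e w c (w (c + 1) q) else (c + 1, q)

def endColAux (e : ℕ → ℕ) (w : ℕ → Equiv.Perm ℕ) : ℕ → ℕ → ℕ → ℕ
  | 0, c, _ => c
  | f + 1, c, q =>
      if (w (c + 1))⁻¹ q < e (c + 1) then endColAux e w f (c + 1) ((w (c + 1))⁻¹ q) else c

/-- The column where the strand through dot `q` of column `c` terminates. -/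
def endCol (n : ℕ) (e : ℕ → ℕ) (w : ℕ → Equiv.Perm ℕ) (c q : ℕ) : ℕ :=
  endColAux e w (n - c) c q

/-- `w` is the left-most lace diagram (for its rank conditions): it is a lace
diagram such that in every column the strands are sorted from top to bottom by
starting column (ascending) and then by terminating column (descending), exactly
as produced by the construction which adds, for `i = 0, …, n` and `j = n, …, i`,
all strands from column `i` to column `j` to the bottom of the diagram; and
strands with the same start and end do not cross. -/
def IsLeftmost (n : ℕ) (e : ℕ → ℕ) (w : ℕ → Equiv.Perm ℕ) : Prop :=
  IsLace n e w ∧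
  (∀ c, c ≤ n → ∀ q q', q < q' → q' < e c →
    startCol e w c q < startCol e w c q' ∨
      (startCol e w c q = startCol e w c q' ∧ endCol n e w c q' ≤ endCol n e w c q)) ∧
  (∀ c, 1 ≤ c → c ≤ n → ∀ q q', q < q' → q' < e c →
    startCol e w c q = startCol e w c q' → endCol n e w c q = endCol n e w c q' →
    w c q < w c q')

/-- The substitution homomorphism `φ_u` of a lace diagram `u`: it sends the
variable `x^i_j` to the variable `b_S` of the strand `S` of `u` through dot
`(i, j)`, where the strand variables are realized as the variables indexed by
the starting dots of strands. -/
noncomputable def phiMap (e : ℕ → ℕ) (u : ℕ → Equiv.Perm ℕ) :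
    MvPolynomial (ℕ × ℕ) ℤ →ₐ[ℤ] MvPolynomial (ℕ × ℕ) ℤ :=
  rename fun p => startDot e u p.1 p.2

/-- The product of the simple transpositions `s (i+1)` (1-indexed) for `i` in `l`. -/
def wordProd (l : List ℕ) : Equiv.Perm ℕ := (l.map fun i => Equiv.swap i (i + 1)).prod

/-- A reduced word for a finitely supported permutation of ℕ. -/
def IsReducedWord (u : Equiv.Perm ℕ) (l : List ℕ) : Prop :=
  wordProd l = u ∧ l.length = ell u

/-- Bruhat order: some reduced word for `u` contains a subword which is a
reduced word for `w`. -/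
def BruhatLE (w u : Equiv.Perm ℕ) : Prop :=
  ∃ l l', IsReducedWord u l ∧ IsReducedWord w l' ∧ l'.Sublist l

namespace Aux

abbrev sw (i : ℕ) : Equiv.Perm ℕ := Equiv.swap i (i + 1)

def Inv (w : Equiv.Perm ℕ) : Set (ℕ × ℕ) := {p | p.1 < p.2 ∧ w p.2 < w p.1}

lemma ell_eq (w : Equiv.Perm ℕ) : ell w = (Inv w).ncard := rfl

def SuppIn (w : Equiv.Perm ℕ) (m : ℕ) : Prop := ∀ x, m ≤ x → w x = x

lemma suppIn_lt {w m x} (h : SuppIn w m) (hx : x < m) : w x < m := by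
  by_contra hc
  push_neg at hc
  have h1 : w (w x) = w x := h _ hc
  have := w.injective h1
  omega

lemma suppIn_mono {w m m'} (h : SuppIn w m) (hm : m ≤ m') : SuppIn w m' :=
  fun x hx => h x (le_trans hm hx)

lemma finSupp_iff {w : Equiv.Perm ℕ} : FinSupp w ↔ ∃ m, SuppIn w m := by
  constructor
  · intro h
    rcases Set.Finite.bddAbove h with ⟨m, hm⟩
    refine ⟨m + 1, fun x hx => ?_⟩
    by_contra hc
    have := hm (Set.mem_setOf.mpr hc)
    omega
  · rintro ⟨m, hm⟩
    apply Set.Finite.subset (Set.finite_Iio m)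
    intro x hx
    simp only [Set.mem_setOf_eq] at hx
    by_contra hc
    exact hx (hm x (by simpa using hc))

lemma suppIn_inv {w m} (h : SuppIn w m) : SuppIn w⁻¹ m := by
  intro x hx
  have := h x hx
  conv_lhs => rw [← this]
  exact w.symm_apply_apply x

lemma suppIn_mul {u v m} (hu : SuppIn u m) (hv : SuppIn v m) : SuppIn (u * v) m := by
  intro x hx
  simp [Equiv.Perm.mul_apply, hv x hx, hu x hx]

lemma suppIn_sw {i m} (h : i + 1 < m) : SuppIn (sw i) m := by
  intro x hx
  apply Equiv.swap_apply_of_ne_of_ne <;> omega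

lemma inv_subset {w m} (h : SuppIn w m) : Inv w ⊆ {p : ℕ × ℕ | p.1 < p.2 ∧ p.2 < m} := by
  rintro ⟨a, b⟩ ⟨h1, h2⟩
  refine ⟨h1, ?_⟩
  simp only at *
  by_contra hc
  push_neg at hc
  have hb : w b = b := h b hc
  rcases lt_or_ge a m with ha | ha
  · have := suppIn_lt h ha; omega
  · have := h a ha; omega

lemma inv_finite {w m} (h : SuppIn w m) : (Inv w).Finite := by
  apply Set.Finite.subset ((Set.finite_Iio m).prod (Set.finite_Iio m))
  intro p hp
  have h2 := inv_subset h hp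
  exact ⟨by exact lt_trans h2.1 h2.2, h2.2⟩

lemma ell_one : ell 1 = 0 := by
  have : Inv 1 = ∅ := by
    ext ⟨a, b⟩
    simp only [Inv, Set.mem_setOf_eq, Set.mem_empty_iff_false, iff_false, not_and]
    intro h
    simp only [Equiv.Perm.one_apply]
    omega
  rw [ell_eq, this, Set.ncard_empty]

lemma eq_one_of_no_descent {w : Equiv.Perm ℕ} (hw : FinSupp w)
    (h : ∀ i, ¬ w (i + 1) < w i) : w = 1 := by
  have mono : StrictMono w := strictMono_nat_of_lt_succ (fun n => by
    have h1 := h n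
    have h2 : w n ≠ w (n + 1) := fun he => (Nat.succ_ne_self n).symm (w.injective he)
    omega)
  have hge : ∀ x, x ≤ w x := fun x => mono.le_apply
  ext x
  simp only [Equiv.Perm.one_apply]
  induction x using Nat.strong_induction_on with
  | _ x ih =>
    have hsurj : ∃ y, w y = x := ⟨w⁻¹ x, w.apply_symm_apply x⟩
    rcases hsurj with ⟨y, hy⟩
    have hyx : y ≤ x := hy ▸ hge y
    rcases eq_or_lt_of_le hyx with rfl | hlt
    · exact hy
    · have := ih y hlt
      omega

lemma exists_descent {w : Equiv.Perm ℕ} (hw : FinSupp w) (h : w ≠ 1) :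
    ∃ i, w (i + 1) < w i := by
  by_contra hc
  push_neg at hc
  exact h (eq_one_of_no_descent hw (fun i => not_lt.mpr (hc i)))

lemma eq_one_of_ell_eq_zero {w : Equiv.Perm ℕ} (hw : FinSupp w) (h : ell w = 0) : w = 1 := by
  rcases finSupp_iff.mp hw with ⟨m, hm⟩
  have hfin := inv_finite hm
  have hempty : Inv w = ∅ := by
    rw [ell_eq] at h
    exact (Set.ncard_eq_zero hfin).mp h
  apply eq_one_of_no_descent hw
  intro i hi
  have : (i, i+1) ∈ Inv w := ⟨by simp, hi⟩
  rw [hempty] at this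
  exact this

end Aux

namespace Aux

lemma mul_sw_apply (w : Equiv.Perm ℕ) (i a : ℕ) : (w * sw i) a = w (sw i a) := rfl

lemma sw_self (i : ℕ) : sw i i = i + 1 := Equiv.swap_apply_left _ _
lemma sw_succ (i : ℕ) : sw i (i+1) = i := Equiv.swap_apply_right _ _
lemma sw_other {i a : ℕ} (h1 : a ≠ i) (h2 : a ≠ i + 1) : sw i a = a :=
  Equiv.swap_apply_of_ne_of_ne h1 h2

lemma mul_sw_sw (w : Equiv.Perm ℕ) (i : ℕ) : w * sw i * sw i = w := by
  rw [mul_assoc, Equiv.swap_mul_self, mul_one]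

lemma sw_apply_lt {i a b : ℕ} (hab : a < b) (hne : ¬(a = i ∧ b = i + 1)) :
    sw i a < sw i b := by
  rcases eq_or_ne a i with rfl | ha1
  · rcases eq_or_ne b (a+1) with rfl | hb2
    · exact absurd ⟨rfl, rfl⟩ hne
    · rw [sw_self, sw_other (by omega) hb2]; omega
  · rcases eq_or_ne a (i+1) with rfl | ha2
    · rw [sw_succ, sw_other (by omega) (by omega)]; omega
    · rw [sw_other ha1 ha2]
      rcases eq_or_ne b i with rfl | hb1
      · rw [sw_self]; omega
      · rcases eq_or_ne b (i+1) with rfl | hb2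
        · rw [sw_succ]; omega
        · rw [sw_other hb1 hb2]; omega

lemma mapsTo_aux (w : Equiv.Perm ℕ) (i : ℕ) :
    Set.MapsTo (fun p : ℕ × ℕ => (sw i p.1, sw i p.2))
      (Inv (w * sw i) \ {(i, i + 1)}) (Inv w \ {(i, i + 1)}) := by
  rintro ⟨a, b⟩ ⟨⟨hab, hinv⟩, hne⟩
  simp only [Set.mem_singleton_iff, Prod.mk.injEq, not_and] at hne
  constructor
  · refine ⟨sw_apply_lt hab ?_, ?_⟩
    · exact fun hh => hne hh.1 hh.2
    · simpa only [mul_sw_apply] using hinv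
  · simp only [Set.mem_singleton_iff, Prod.mk.injEq, not_and]
    intro h1 h2
    have ha : a = i + 1 := by
      have := congrArg (sw i) h1
      simpa [Equiv.swap_apply_self, sw_self] using this
    have hb : b = i := by
      have := congrArg (sw i) h2
      simpa [Equiv.swap_apply_self, sw_succ] using this
    omega

lemma ncard_inv_diff (w : Equiv.Perm ℕ) (i : ℕ) :
    (Inv (w * sw i) \ {(i, i + 1)}).ncard = (Inv w \ {(i, i + 1)}).ncard := by
  set T : ℕ × ℕ → ℕ × ℕ := fun p => (sw i p.1, sw i p.2) with hT
  have hTT : ∀ p, T (T p) = p := by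
    rintro ⟨a, b⟩
    simp [hT, Equiv.swap_apply_self]
  have h1 := mapsTo_aux w i
  have h2 := mapsTo_aux (w * sw i) i
  rw [mul_sw_sw] at h2
  have hinj : Set.InjOn T (Inv (w * sw i) \ {(i, i + 1)}) := by
    intro p _ q _ h
    have := congrArg T h
    rwa [hTT, hTT] at this
  have himg : T '' (Inv (w * sw i) \ {(i, i + 1)}) = Inv w \ {(i, i + 1)} := by
    apply Set.Subset.antisymm (Set.mapsTo_iff_image_subset.mp h1)
    intro q hq
    exact ⟨T q, h2 hq, hTT q⟩
  rw [← himg, Set.ncard_image_of_injOn hinj]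

lemma finSupp_one : FinSupp 1 := finSupp_iff.mpr ⟨0, fun x _ => rfl⟩

lemma finSupp_mul_sw {w : Equiv.Perm ℕ} (hw : FinSupp w) (i : ℕ) : FinSupp (w * sw i) := by
  rcases finSupp_iff.mp hw with ⟨m, hm⟩
  exact finSupp_iff.mpr ⟨max m (i + 2),
    suppIn_mul (suppIn_mono hm le_sup_left) (suppIn_sw (by omega))⟩

lemma ell_mul_sw_asc {w : Equiv.Perm ℕ} (hw : FinSupp w) {i : ℕ} (h : w i < w (i + 1)) :
    ell (w * sw i) = ell w + 1 := by
  have hfin : (Inv (w * sw i)).Finite := by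
    rcases finSupp_iff.mp (finSupp_mul_sw hw i) with ⟨m, hm⟩
    exact inv_finite hm
  have hmem : (i, i + 1) ∈ Inv (w * sw i) := by
    refine ⟨by omega, ?_⟩
    simp only [mul_sw_apply, sw_self, sw_succ]
    exact h
  have hnmem : (i, i + 1) ∉ Inv w := by
    rintro ⟨-, h2⟩
    exact absurd (show w (i + 1) < w i from h2) (by omega)
  have e1 : (Inv (w * sw i) \ {(i, i + 1)}).ncard + 1 = ell (w * sw i) :=
    Set.ncard_diff_singleton_add_one hmem hfin
  have e2 : Inv w \ {(i, i + 1)} = Inv w := Set.diff_singleton_eq_self hnmem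
  rw [← e1, ncard_inv_diff w i, e2, ← ell_eq]

lemma ell_mul_sw_desc {w : Equiv.Perm ℕ} (hw : FinSupp w) {i : ℕ} (h : w (i + 1) < w i) :
    ell w = ell (w * sw i) + 1 := by
  have h' : (w * sw i) i < (w * sw i) (i + 1) := by
    simp only [mul_sw_apply, sw_self, sw_succ]; exact h
  have := ell_mul_sw_asc (finSupp_mul_sw hw i) h'
  rwa [mul_sw_sw] at this

lemma ell_mul_sw_le {w : Equiv.Perm ℕ} (hw : FinSupp w) (i : ℕ) :
    ell (w * sw i) ≤ ell w + 1 := by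
  rcases lt_trichotomy (w i) (w (i + 1)) with h | h | h
  · rw [ell_mul_sw_asc hw h]
  · exact absurd (w.injective h) (by omega)
  · rw [ell_mul_sw_desc hw h]; omega

end Aux

namespace Aux

lemma longest_apply (m i : ℕ) : longest m i = if i < m then m - 1 - i else i := rfl

lemma suppIn_longest (m : ℕ) : SuppIn (longest m) m := by
  intro x hx
  simp [longest_apply, Nat.not_lt.mpr hx]

lemma finSupp_longest (m : ℕ) : FinSupp (longest m) :=
  finSupp_iff.mpr ⟨m, suppIn_longest m⟩

lemma inv_longest (m : ℕ) : Inv (longest m) = {p : ℕ × ℕ | p.1 < p.2 ∧ p.2 < m} := by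
  apply Set.Subset.antisymm (inv_subset (suppIn_longest m))
  rintro ⟨a, b⟩ ⟨h1, h2⟩
  simp only at h1 h2
  refine ⟨h1, ?_⟩
  show longest m b < longest m a
  simp only [longest_apply, if_pos h2, if_pos (lt_trans h1 h2)]
  omega

lemma ell_le_longest {w : Equiv.Perm ℕ} {m : ℕ} (h : SuppIn w m) :
    ell w ≤ ell (longest m) := by
  rw [ell_eq, ell_eq]
  exact Set.ncard_le_ncard ((inv_longest m) ▸ inv_subset h) (inv_finite (suppIn_longest m))

lemma exists_ascent_of_ne_longest {w : Equiv.Perm ℕ} {m : ℕ} (h : SuppIn w m)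
    (hne : w ≠ longest m) : ∃ i, i + 1 < m ∧ w i < w (i + 1) := by
  by_contra hc
  push_neg at hc
  apply hne
  -- w is strictly decreasing on [0, m)
  have hdec : ∀ i, i + 1 < m → w (i + 1) < w i := by
    intro i hi
    have h1 := hc i hi
    have h2 : w i ≠ w (i + 1) := fun he => by
      have := w.injective he; omega
    omega
  -- lower bound: w k ≥ m - 1 - k for k < m
  have hlow : ∀ j k, k + j + 1 = m → j ≤ w k := by
    intro j
    induction j with
    | zero => intro k _; exact Nat.zero_le _
    | succ j ih =>
      intro k hk
      have h1 := ih (k + 1) (by omega)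
      have h2 := hdec k (by omega)
      omega
  -- upper bound: w k ≤ m - 1 - k for k < m
  have hupp : ∀ k, k < m → w k + k ≤ m - 1 := by
    intro k hk
    induction k with
    | zero => have := suppIn_lt h hk; omega
    | succ k ih =>
      have h1 := ih (by omega)
      have h2 := hdec k (by omega)
      omega
  ext x
  rcases lt_or_ge x m with hx | hx
  · have h1 := hlow (m - 1 - x) x (by omega)
    have h2 := hupp x hx
    rw [longest_apply, if_pos hx]
    omega
  · rw [h x hx, longest_apply, if_neg (Nat.not_lt.mpr hx)]

lemma wordProd_nil : wordProd [] = 1 := rfl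

lemma wordProd_append_singleton (l : List ℕ) (i : ℕ) :
    wordProd (l ++ [i]) = wordProd l * sw i := by
  simp [wordProd, List.map_append]

lemma exists_reduced_word {w : Equiv.Perm ℕ} (hw : FinSupp w) :
    ∃ l, IsReducedWord w l := by
  suffices h : ∀ N w, FinSupp w → ell w ≤ N → ∃ l, IsReducedWord w l by
    exact h (ell w) w hw le_rfl
  intro N
  induction N with
  | zero =>
    intro w hw hN
    rw [eq_one_of_ell_eq_zero hw (Nat.le_zero.mp hN)]
    exact ⟨[], wordProd_nil, by rw [ell_one]; rfl⟩
  | succ N ih =>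
    intro w hw hN
    rcases eq_or_ne w 1 with rfl | hne
    · exact ⟨[], wordProd_nil, by rw [ell_one]; rfl⟩
    · rcases exists_descent hw hne with ⟨i, hi⟩
      have hd := ell_mul_sw_desc hw hi
      rcases ih (w * sw i) (finSupp_mul_sw hw i) (by omega) with ⟨l, hl1, hl2⟩
      refine ⟨l ++ [i], ?_, ?_⟩
      · rw [wordProd_append_singleton, hl1, mul_sw_sw]
      · rw [List.length_append, hl2]
        simp only [List.length_singleton]
        omega

lemma bruhat_refl {w : Equiv.Perm ℕ} (hw : FinSupp w) : BruhatLE w w := by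
  rcases exists_reduced_word hw with ⟨l, hl⟩
  exact ⟨l, l, hl, hl, List.Sublist.refl l⟩

lemma bruhat_of_descent_right {u w : Equiv.Perm ℕ} (hu : FinSupp u) {i : ℕ}
    (hd : u (i + 1) < u i) (h : BruhatLE w (u * sw i)) : BruhatLE w u := by
  rcases h with ⟨l, l', ⟨hl1, hl2⟩, hw', hsub⟩
  refine ⟨l ++ [i], l', ⟨?_, ?_⟩, hw', hsub.trans (List.sublist_append_left l [i])⟩
  · rw [wordProd_append_singleton, hl1, mul_sw_sw]
  · rw [List.length_append, hl2, List.length_singleton]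
    have := ell_mul_sw_desc hu hd
    omega

lemma bruhat_of_descent_both {u w : Equiv.Perm ℕ} (hu : FinSupp u) (hw : FinSupp w) {i : ℕ}
    (hdu : u (i + 1) < u i) (hdw : w (i + 1) < w i)
    (h : BruhatLE (w * sw i) (u * sw i)) : BruhatLE w u := by
  rcases h with ⟨l, l', ⟨hl1, hl2⟩, ⟨hw1, hw2⟩, hsub⟩
  refine ⟨l ++ [i], l' ++ [i], ⟨?_, ?_⟩, ⟨?_, ?_⟩, hsub.append (List.Sublist.refl [i])⟩
  · rw [wordProd_append_singleton, hl1, mul_sw_sw]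
  · rw [List.length_append, hl2, List.length_singleton]
    have := ell_mul_sw_desc hu hdu
    omega
  · rw [wordProd_append_singleton, hw1, mul_sw_sw]
  · rw [List.length_append, hw2, List.length_singleton]
    have := ell_mul_sw_desc hw hdw
    omega

end Aux

namespace Aux

lemma ell_eq_card {u : Equiv.Perm ℕ} {M : ℕ} (hM : SuppIn u M) :
    ell u = (((Finset.range M) ×ˢ (Finset.range M)).filter
      (fun p => p.1 < p.2 ∧ u p.2 < u p.1)).card := by
  rw [ell_eq, ← Set.ncard_coe_finset]
  congr 1
  ext ⟨a, b⟩
  simp only [Inv, Set.mem_setOf_eq, Finset.coe_filter, Finset.mem_product, Finset.mem_range]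
  constructor
  · rintro ⟨h1, h2⟩
    have hb := (inv_subset hM (show (a,b) ∈ Inv u from ⟨h1, h2⟩)).2
    exact ⟨⟨lt_trans h1 hb, hb⟩, h1, h2⟩
  · rintro ⟨-, h⟩
    exact h

lemma base_card {u : Equiv.Perm ℕ} (hu : FinSupp u) {m : ℕ}
    (H : ∀ i, i + 2 ≤ m → m ≤ u i + i + 1) : ell (longest m) ≤ ell u := by
  rcases finSupp_iff.mp hu with ⟨M₀, hM₀⟩
  set M := max M₀ m with hMdef
  have hM : SuppIn u M := suppIn_mono hM₀ le_sup_left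
  have hmM : m ≤ M := le_sup_right
  -- per-row counts
  set c : ℕ → ℕ := fun i => ((Finset.Ioo i M).filter (fun t => u t < u i)).card with hc
  have hrow : ∀ i, i + 2 ≤ m → m - 1 - i ≤ c i := by
    intro i hi
    have hiM : i < M := by omega
    have huiM : u i < M := suppIn_lt hM hiM
    set T := (Finset.range M).filter (fun t => u t < u i) with hT
    have hTcard : T.card = u i := by
      have hTeq : T = (Finset.range (u i)).image ⇑u⁻¹ := by
        ext t
        simp only [hT, Finset.mem_filter, Finset.mem_range, Finset.mem_image]
        constructor
        · rintro ⟨-, h2⟩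
          exact ⟨u t, h2, u.symm_apply_apply t⟩
        · rintro ⟨v, hv, rfl⟩
          have huv : u (u⁻¹ v) = v := u.apply_symm_apply v
          refine ⟨?_, by omega⟩
          by_contra hcon
          push_neg at hcon
          have := hM _ hcon
          omega
      rw [hTeq, Finset.card_image_of_injective _ u⁻¹.injective, Finset.card_range]
    set T1 := T.filter (· < i) with hT1
    set T2 := T.filter (i < ·) with hT2
    have hsplit : T1.card + T2.card = u i := by
      rw [← hTcard, ← Finset.card_union_of_disjoint]
      · congr 1
        ext t
        simp only [hT1, hT2, Finset.mem_union, Finset.mem_filter, hT, Finset.mem_range]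
        constructor
        · rintro (⟨h, -⟩ | ⟨h, -⟩) <;> exact h
        · rintro ⟨h1, h2⟩
          have : t ≠ i := fun he => by rw [he] at h2; omega
          rcases lt_or_gt_of_ne this with h | h
          · exact Or.inl ⟨⟨h1, h2⟩, h⟩
          · exact Or.inr ⟨⟨h1, h2⟩, h⟩
      · apply Finset.disjoint_filter_filter'
        exact disjoint_iff_inf_le.mpr (fun t ⟨h1, h2⟩ => absurd (lt_trans h1 h2) (lt_irrefl t))
    have hT2eq : T2.card = c i := by
      congr 1
      ext t
      simp only [hT2, hT, hc, Finset.mem_filter, Finset.mem_range, Finset.mem_Ioo]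
      tauto
    have hT1le : T1.card ≤ i - (m - u i) := by
      have hsub : T1 ⊆ Finset.Ico (m - u i) i := by
        intro t ht
        simp only [hT1, hT, Finset.mem_filter, Finset.mem_range] at ht
        obtain ⟨⟨-, h2⟩, h3⟩ := ht
        have := H t (by omega)
        simp only [Finset.mem_Ico]
        omega
      calc T1.card ≤ _ := Finset.card_le_card hsub
        _ = i - (m - u i) := Nat.card_Ico _ _
    have hHi := H i hi
    omega
  -- the length of u dominates the sum of the row counts
  have hsum : ∑ i ∈ Finset.range m, c i ≤ ell u := by
    rw [ell_eq_card hM]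
    set B : ℕ → Finset (ℕ × ℕ) :=
      fun i => ((Finset.Ioo i M).filter (fun t => u t < u i)).image (fun t => (i, t)) with hB
    have hBcard : ∀ i, (B i).card = c i := by
      intro i
      rw [hB]
      exact Finset.card_image_of_injective _ (fun a b h => (Prod.mk.injEq _ _ _ _).mp h |>.2)
    have hdisj : ∀ i ∈ Finset.range m, ∀ j ∈ Finset.range m, i ≠ j → Disjoint (B i) (B j) := by
      intro i _ j _ hij
      rw [Finset.disjoint_left]
      rintro ⟨a, b⟩ ha hb
      simp only [hB, Finset.mem_image, Finset.mem_filter, Finset.mem_Ioo] at ha hb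
      rcases ha with ⟨t, -, ht⟩
      rcases hb with ⟨t', -, ht'⟩
      apply hij
      have e1 := congrArg Prod.fst ht
      have e2 := congrArg Prod.fst ht'
      simp only [Prod.fst] at e1 e2
      omega
    calc ∑ i ∈ Finset.range m, c i = ∑ i ∈ Finset.range m, (B i).card := by
          simp only [hBcard]
      _ = ((Finset.range m).biUnion B).card := (Finset.card_biUnion hdisj).symm
      _ ≤ _ := by
          apply Finset.card_le_card
          intro p hp
          simp only [Finset.mem_biUnion, hB, Finset.mem_image, Finset.mem_filter,
            Finset.mem_Ioo] at hp
          rcases hp with ⟨i, hi, t, ⟨⟨hit, htM⟩, hut⟩, rfl⟩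
          simp only [Finset.mem_filter, Finset.mem_product, Finset.mem_range]
          exact ⟨⟨by simp only [Finset.mem_range] at hi; omega, htM⟩, hit, hut⟩
  -- the length of the longest element is the sum of the row bounds
  have hlong : ell (longest m) = ∑ i ∈ Finset.range m, (m - 1 - i) := by
    have h1 : ell (longest m) = (((Finset.range m) ×ˢ (Finset.range m)).filter
        (fun p => p.1 < p.2)).card := by
      rw [ell_eq, inv_longest, ← Set.ncard_coe_finset]
      congr 1
      ext ⟨a, b⟩
      simp only [Set.mem_setOf_eq, Finset.coe_filter, Finset.mem_product, Finset.mem_range]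
      constructor
      · rintro ⟨h1, h2⟩; exact ⟨⟨lt_trans h1 h2, h2⟩, h1⟩
      · rintro ⟨⟨-, h2⟩, h1⟩; exact ⟨h1, h2⟩
    rw [h1]
    have h2 : ((Finset.range m) ×ˢ (Finset.range m)).filter (fun p => p.1 < p.2) =
        (Finset.range m).biUnion (fun i => (Finset.Ioo i m).image (fun t => (i, t))) := by
      ext ⟨a, b⟩
      simp only [Finset.mem_filter, Finset.mem_product, Finset.mem_range, Finset.mem_biUnion,
        Finset.mem_image, Finset.mem_Ioo]
      constructor
      · rintro ⟨⟨h1, h2⟩, h3⟩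
        exact ⟨a, h1, b, ⟨h3, h2⟩, rfl⟩
      · rintro ⟨i, hi, t, ⟨h1, h2⟩, he⟩
        injection he with e1 e2
        subst e1; subst e2
        exact ⟨⟨hi, h2⟩, h1⟩
    rw [h2, Finset.card_biUnion]
    · apply Finset.sum_congr rfl
      intro i _
      rw [Finset.card_image_of_injective _ (fun a b h => (Prod.mk.injEq _ _ _ _).mp h |>.2),
        Nat.card_Ioo]
      omega
    · intro i _ j _ hij
      rw [Function.onFun, Finset.disjoint_left]
      rintro ⟨a, b⟩ ha hb
      simp only [Finset.mem_image, Finset.mem_Ioo] at ha hb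
      rcases ha with ⟨t, -, ht⟩
      rcases hb with ⟨t', -, ht'⟩
      apply hij
      have e1 := congrArg Prod.fst ht
      have e2 := congrArg Prod.fst ht'
      simp only [Prod.fst] at e1 e2
      omega
  rw [hlong]
  calc ∑ i ∈ Finset.range m, (m - 1 - i) ≤ ∑ i ∈ Finset.range m, c i := by
        apply Finset.sum_le_sum
        intro i hi
        rcases le_or_gt (i + 2) m with h | h
        · exact hrow i h
        · simp only [Finset.mem_range] at hi
          omega
    _ ≤ ell u := hsum

end Aux

namespace Aux

lemma rename_congr_vars {σ τ : Type} {f g : σ → τ} {p : MvPolynomial σ ℤ}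
    (h : ∀ i ∈ p.vars, f i = g i) : rename f p = rename g p := by
  have := hom_congr_vars (f₁ := (rename (R := ℤ) f).toRingHom)
    (f₂ := (rename (R := ℤ) g).toRingHom)
    (by ext r; simp) (fun i hi _ => by simp [h i hi]) (rfl (a := p))
  simpa using this

lemma E_sX (u : Equiv.Perm ℕ) (i : ℕ) (f : MvPolynomial (ℕ ⊕ ℕ) ℤ) :
    rename (Sum.elim ⇑u id) (sX i f) = rename (Sum.elim ⇑(u * sw i) id) f := by
  have hfun : (Sum.elim ⇑u id ∘ Sum.map ⇑(Equiv.swap i (i + 1)) id)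
      = Sum.elim ⇑(u * sw i) id := by
    funext x
    cases x with
    | inl a => simp [mul_sw_apply]
    | inr b => simp
  rw [sX, rename_rename, hfun]

lemma X_sub_X_ne {a b : ℕ} (h : a ≠ b) : (X a : MvPolynomial ℕ ℤ) - X b ≠ 0 := by
  intro hc
  have h1 : (X a : MvPolynomial ℕ ℤ) = X b := by linear_combination hc
  have h2 := congrArg (MvPolynomial.coeff (Finsupp.single a 1)) h1
  rw [coeff_X, coeff_X'] at h2
  rw [if_neg (fun he => h ((Finsupp.single_left_injective Nat.one_ne_zero) he).symm)] at h2
  simp at h2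

lemma vanish {S : Equiv.Perm ℕ → MvPolynomial (ℕ ⊕ ℕ) ℤ} (hS : IsSchubertFamily S) (m : ℕ) :
    ∀ N (w : Equiv.Perm ℕ), SuppIn w m → ell (longest m) - ell w ≤ N →
      ∀ u : Equiv.Perm ℕ, FinSupp u → ell u < ell w →
        rename (Sum.elim ⇑u id) (S w) = 0 := by
  have base : ∀ u : Equiv.Perm ℕ, FinSupp u → ell u < ell (longest m) →
      rename (Sum.elim ⇑u id) (S (longest m)) = 0 := by
    intro u hu hlt
    have hex : ∃ i, i + 2 ≤ m ∧ u i + i + 1 < m := by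
      by_contra hc
      push_neg at hc
      exact absurd (base_card hu (fun i hi => hc i hi)) (by omega)
    rcases hex with ⟨i0, hi0, hu0⟩
    rw [hS.1 m, map_prod]
    apply Finset.prod_eq_zero (Finset.mem_range.mpr (by omega : i0 < m))
    rw [map_prod]
    apply Finset.prod_eq_zero (Finset.mem_range.mpr (by omega : u i0 < m))
    rw [apply_ite (rename (Sum.elim ⇑u id)), if_pos (by omega : i0 + u i0 + 2 ≤ m)]
    rw [map_sub, rename_X, rename_X]
    simp
  intro N
  induction N with
  | zero =>
    intro w hw hN u hu hlt
    rcases eq_or_ne w (longest m) with rfl | hne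
    · exact base u hu hlt
    · exfalso
      rcases exists_ascent_of_ne_longest hw hne with ⟨i, him, hasc⟩
      have hw' : SuppIn (w * sw i) m := suppIn_mul hw (suppIn_sw him)
      have he : ell (w * sw i) = ell w + 1 := ell_mul_sw_asc (finSupp_iff.mpr ⟨m, hw⟩) hasc
      have := ell_le_longest hw'
      omega
  | succ N ih =>
    intro w hw hN u hu hlt
    rcases eq_or_ne w (longest m) with rfl | hne
    · exact base u hu hlt
    · rcases exists_ascent_of_ne_longest hw hne with ⟨i, him, hasc⟩
      have hwfin : FinSupp w := finSupp_iff.mpr ⟨m, hw⟩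
      have hw' : SuppIn (w * sw i) m := suppIn_mul hw (suppIn_sw him)
      have hell' : ell (w * sw i) = ell w + 1 := ell_mul_sw_asc hwfin hasc
      have hle : ell (w * sw i) ≤ ell (longest m) := ell_le_longest hw'
      have hdesc : (w * sw i) (i + 1) < (w * sw i) i := by
        rw [mul_sw_apply, mul_sw_apply, sw_self, sw_succ]
        exact hasc
      have hid := (hS.2.1 (w * sw i) (finSupp_iff.mpr ⟨m, hw'⟩) i).1 hdesc
      rw [mul_sw_sw] at hid
      have h0 : rename (Sum.elim ⇑u id) (S (w * sw i)) = 0 :=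
        ih (w * sw i) hw' (by omega) u hu (by omega)
      have h1 : rename (Sum.elim ⇑(u * sw i) id) (S (w * sw i)) = 0 :=
        ih (w * sw i) hw' (by omega) (u * sw i) (finSupp_mul_sw hu i)
          (by have := ell_mul_sw_le hu i; omega)
      have happ := congrArg (rename (R := ℤ) (Sum.elim ⇑u id)) hid
      rw [map_mul, map_sub, map_sub, E_sX, h0, h1, rename_X, rename_X] at happ
      simp only [Sum.elim_inl, sub_zero] at happ
      rcases mul_eq_zero.mp happ with h | h
      · exact absurd h (X_sub_X_ne (fun he => by have := u.injective he; omega))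
      · exact h

lemma bruhat_main {S : Equiv.Perm ℕ → MvPolynomial (ℕ ⊕ ℕ) ℤ} (hS : IsSchubertFamily S) :
    ∀ N (u w : Equiv.Perm ℕ), FinSupp u → FinSupp w → ell u ≤ N →
      rename (Sum.elim ⇑u id) (S w) ≠ 0 → BruhatLE w u := by
  have base : ∀ w : Equiv.Perm ℕ, FinSupp w →
      rename (Sum.elim ⇑(1 : Equiv.Perm ℕ) id) (S w) ≠ 0 → BruhatLE w 1 := by
    intro w hw hne
    rcases eq_or_ne w 1 with rfl | hw1
    · exact bruhat_refl finSupp_one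
    · exfalso
      rcases finSupp_iff.mp hw with ⟨m, hm⟩
      have hlt : ell (1 : Equiv.Perm ℕ) < ell w := by
        rw [ell_one]
        rcases Nat.eq_zero_or_pos (ell w) with h | h
        · exact absurd (eq_one_of_ell_eq_zero hw h) hw1
        · exact h
      exact hne (vanish hS m (ell (longest m) - ell w) w hm le_rfl 1 finSupp_one hlt)
  intro N
  induction N with
  | zero =>
    intro u w hu hw hN hne
    have h1 : u = 1 := eq_one_of_ell_eq_zero hu (Nat.le_zero.mp hN)
    subst h1
    exact base w hw hne
  | succ N ih =>
    intro u w hu hw hN hne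
    rcases eq_or_ne u 1 with rfl | hu1
    · exact base w hw hne
    · rcases exists_descent hu hu1 with ⟨i, hdi⟩
      have hu' : FinSupp (u * sw i) := finSupp_mul_sw hu i
      have hellu : ell u = ell (u * sw i) + 1 := ell_mul_sw_desc hu hdi
      rcases lt_trichotomy (w i) (w (i + 1)) with hwi | hwi | hwi
      · have hfix := (hS.2.1 w hw i).2 hwi
        have heq : rename (Sum.elim ⇑u id) (S w)
            = rename (Sum.elim ⇑(u * sw i) id) (S w) := by
          conv_lhs => rw [← hfix]
          exact E_sX u i (S w)
        apply bruhat_of_descent_right hu hdi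
        exact ih (u * sw i) w hu' hw (by omega) (by rw [← heq]; exact hne)
      · exact absurd (w.injective hwi) (by omega)
      · have hid := (hS.2.1 w hw i).1 hwi
        have happ := congrArg (rename (R := ℤ) (Sum.elim ⇑(u * sw i) id)) hid
        rw [map_mul, map_sub, map_sub, E_sX, mul_sw_sw] at happ
        by_cases h0 : rename (Sum.elim ⇑(u * sw i) id) (S w) = 0
        · have hne2 : rename (Sum.elim ⇑(u * sw i) id) (S (w * sw i)) ≠ 0 := by
            intro h00
            rw [h0, h00, mul_zero] at happ
            exact hne (by linear_combination happ)
          have hb := ih (u * sw i) (w * sw i) hu' (finSupp_mul_sw hw i) (by omega) hne2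
          exact bruhat_of_descent_both hu hw hdi hwi hb
        · exact bruhat_of_descent_right hu hdi (ih (u * sw i) w hu' hw (by omega) h0)

end Aux

/-- if `u` is a lace diagram and `w` a sequence of finitely
supported permutations satisfying the descent bounds of a lace diagram, and
`φ_u(S(w)) ≠ 0`, then `w i ≤ u i` in the Bruhat order for every `i = 1, …, n`. -/
theorem phi_ne_zero_bruhat (n : ℕ) (hn : 1 ≤ n) (e : ℕ → ℕ)
    (u w : ℕ → Equiv.Perm ℕ) (hu : IsLace n e u) (hw : IsLace n e w)
    (S : Equiv.Perm ℕ → MvPolynomial (ℕ ⊕ ℕ) ℤ) (hS : IsSchubertFamily S)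
    (h : phiMap e u (Sprod n S w) ≠ 0) :
    ∀ i, 1 ≤ i → i ≤ n → BruhatLE (w i) (u i) := by
  intro i hi1 hi2
  obtain ⟨hwfin, hwdesc, hwinv⟩ := hw.2 i hi1 hi2
  obtain ⟨hufin, -, -⟩ := hu.2 i hi1 hi2
  have hfac : phiMap e u
      (rename (Sum.elim (fun a => (i, a)) (fun b => (i - 1, b))) (S (w i))) ≠ 0 := by
    intro h0
    apply h
    rw [Sprod, map_prod]
    exact Finset.prod_eq_zero (Finset.mem_Icc.mpr ⟨hi1, hi2⟩) h0
  have hvars := hS.2.2 (w i) hwfin (e i) (e (i - 1))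
    (fun t ht hd => absurd (hwdesc t hd) (by omega))
    (fun t ht hd => absurd (hwinv t hd) (by omega))
  obtain ⟨c, rfl⟩ : ∃ c, i = c + 1 := ⟨i - 1, by omega⟩
  simp only [phiMap] at hfac
  rw [rename_rename] at hfac
  set χ : ℕ → ℕ × ℕ := fun d => if d < e c then startDot e u c d
    else (c + 1, (u (c + 1))⁻¹ d) with hχ
  have hagree : ∀ v ∈ (S (w (c + 1))).vars,
      ((fun p : ℕ × ℕ => startDot e u p.1 p.2) ∘
        Sum.elim (fun a => (c + 1, a)) (fun b => (c + 1 - 1, b))) v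
      = (χ ∘ Sum.elim ⇑(u (c + 1)) id) v := by
    intro v hv
    rcases hvars v hv with ⟨a, ha, rfl⟩ | ⟨b, hb, rfl⟩
    · simp only [Function.comp_apply, Sum.elim_inl, hχ]
      rw [startDot]
      split_ifs with hlt
      · simp [hlt]
      · simp [hlt]
    · simp only [Function.comp_apply, Sum.elim_inr, hχ, id_eq]
      simp [show b < e c from hb]
  rw [Aux.rename_congr_vars hagree, ← rename_rename] at hfac
  have hEne : rename (Sum.elim ⇑(u (c + 1)) id) (S (w (c + 1))) ≠ 0 :=
    fun h0 => hfac (by rw [h0, map_zero])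
  exact Aux.bruhat_main hS (ell (u (c + 1))) (u (c + 1)) (w (c + 1)) hufin hwfin le_rfl hEne
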